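/- Let p be a prime. Then every generalized Cayley graph on the cyclic group ℤ/2pℤ is a Cayley graph; that is, for every subset S ⊆ ℤ/2pℤ and every automorphism α of ℤ/2pℤ with α² = 1 such that α(x⁻¹)·x ∉ S for all x and α(S⁻¹) = S, the graph GC(ℤ/2pℤ, S, α) is isomorphic to a Cayley graph Cay(H, T) for some group H and subset T with 1 ∉ T and T⁻¹ = T. -/

import Mathlib

/-- The generalized Cayley graph `GC(G, S, α)`. -/
def GC {G : Type*} [Group G] (α : G ≃* G) (S : Set G)
    (h1 : ∀ x : G, α (α x) = x)
    (h2 : ∀ x : G, α x⁻¹ * x ∉ S)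
    (h3 : ⇑α '' S⁻¹ = S) : SimpleGraph G where
  Adj x y := α x⁻¹ * y ∈ S
  symm := by
    refine ⟨?_⟩
    intro x y hxy
    have hmem : (α x⁻¹ * y)⁻¹ ∈ S⁻¹ := by simpa [Set.mem_inv] using hxy
    have himg : α ((α x⁻¹ * y)⁻¹) ∈ ⇑α '' S⁻¹ := Set.mem_image_of_mem _ hmem
    rw [h3] at himg
    simpa [mul_inv_rev, map_mul, map_inv, h1] using himg
  loopless := ⟨fun x hx => h2 x hx⟩

/-- The Cayley graph `Cay(H, T)`. -/
def Cay {H : Type*} [Group H] (T : Set H) (hT1 : (1 : H) ∉ T) (hT2 : T⁻¹ = T) :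
    SimpleGraph H where
  Adj x y := x⁻¹ * y ∈ T
  symm := by
    refine ⟨?_⟩
    intro x y hxy
    have : (x⁻¹ * y)⁻¹ ∈ T⁻¹ := by simpa [Set.mem_inv] using hxy
    rw [hT2] at this
    simpa [mul_inv_rev] using this
  loopless := ⟨fun x hx => hT1 (by simpa using hx)⟩

/-- A representation of the graph `X` as a Cayley graph: a group, together with a
connection set `T` with `1 ∉ T` and `T⁻¹ = T`, whose Cayley graph is isomorphic to `X`. -/
structure CayleyRepn {V : Type*} (X : SimpleGraph V) where
  carrier : Type
  [group : Group carrier]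
  conn : Set carrier
  one_not_mem : (1 : carrier) ∉ conn
  inv_eq : conn⁻¹ = conn
  iso : Nonempty (X ≃g Cay conn one_not_mem inv_eq)

/-- A graph is a Cayley graph if it is isomorphic to `Cay(H, T)` for some group `H` and
some subset `T ⊆ H` with `1 ∉ T` and `T⁻¹ = T`. -/
def IsCayleyGraph {V : Type*} (X : SimpleGraph V) : Prop := Nonempty (CayleyRepn X)

section Aux

lemma sq_one_zmod (p : ℕ) (hp : p.Prime) (c : ZMod (2*p)) (hc : c * c = 1) :
    c = 1 ∨ c = -1 := by
  by_cases hp2 : p = 2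
  · subst hp2; revert hc; revert c; decide
  · haveI := Fact.mk hp
    have hco : Nat.Coprime 2 p := (Nat.coprime_primes Nat.prime_two hp).mpr (fun h => hp2 h.symm)
    let f := ZMod.chineseRemainder hco
    have h2 : (f c).1 = 1 := by
      have : (f c).1 * (f c).1 = 1 := by
        have := congrArg (fun x => (f x).1) hc
        simpa [map_mul] using this
      generalize (f c).1 = a at this ⊢
      revert this; revert a; decide
    have hpp : (f c).2 = 1 ∨ (f c).2 = -1 := by
      have : (f c).2 * (f c).2 = 1 := by
        have := congrArg (fun x => (f x).2) hc
        simpa [map_mul] using this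
      exact mul_self_eq_one_iff.mp this
    rcases hpp with h | h
    · left
      apply f.injective
      rw [map_one]
      exact Prod.ext (by simp [h2]) (by simp [h])
    · right
      apply f.injective
      have : f (-1) = (-1, -1) := by rw [map_neg, map_one]; rfl
      rw [this]
      refine Prod.ext ?_ (by simp [h])
      simp only [h2]; decide

/-- the map D_p → Z_{2p}: r i ↦ 2i, sr i ↦ 2i+1. -/
def psi (p : ℕ) [NeZero p] : DihedralGroup p → Multiplicative (ZMod (2 * p))
  | DihedralGroup.r i => Multiplicative.ofAdd ((2 * i.val : ℕ) : ZMod (2 * p))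
  | DihedralGroup.sr i => Multiplicative.ofAdd ((2 * i.val + 1 : ℕ) : ZMod (2 * p))

lemma cast_mod (p m : ℕ) [NeZero p] :
    ((2 * (m % p) : ℕ) : ZMod (2 * p)) = ((2 * m : ℕ) : ZMod (2 * p)) := by
  have h : (2 * m : ℕ) = 2 * (m % p) + (2 * p) * (m / p) := by
    conv_lhs => rw [← Nat.mod_add_div m p]
    ring
  rw [h, Nat.cast_add, Nat.cast_mul (2*p), ZMod.natCast_self, zero_mul, add_zero]

lemma odd_cast (p : ℕ) [NeZero p] (i j : ZMod p) :
    ((2 * ((i + j).val) + 1 : ℕ) : ZMod (2 * p)) =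
      ((2 * i.val + (2 * j.val + 1) : ℕ) : ZMod (2 * p)) := by
  rw [ZMod.val_add]
  have := cast_mod p (i.val + j.val)
  push_cast at this ⊢
  linear_combination this

lemma odd_eq (p : ℕ) [NeZero p] (i j : ZMod p) :
    ((2 * ((i + j).val) + 1 : ℕ) : ZMod (2 * p)) =
      ((2 * i.val : ℕ) : ZMod (2 * p)) + ((2 * j.val + 1 : ℕ) : ZMod (2 * p)) := by
  rw [ZMod.val_add]
  have := cast_mod p (i.val + j.val)
  push_cast at this ⊢
  linear_combination this

lemma psi_inj (p : ℕ) [NeZero p] : Function.Injective (psi p) := by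
  have hval : ∀ i : ZMod p, 2 * i.val < 2 * p := fun i => by
    have := ZMod.val_lt i; omega
  intro a b hab
  have key : ∀ m k : ℕ, m < 2 * p → k < 2 * p →
      ((m : ℕ) : ZMod (2*p)) = ((k : ℕ) : ZMod (2*p)) → m = k := by
    intro m k hm hk h
    have := congrArg ZMod.val h
    rwa [ZMod.val_cast_of_lt hm, ZMod.val_cast_of_lt hk] at this
  cases a with
  | r i => cases b with
    | r j =>
      simp only [psi] at hab
      replace hab := Multiplicative.ofAdd.injective hab
      have := key _ _ (hval i) (hval j) hab
      have : i.val = j.val := by omega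
      exact congrArg _ (ZMod.val_injective p this)
    | sr j =>
      simp only [psi] at hab
      replace hab := Multiplicative.ofAdd.injective hab
      have := key _ _ (hval i) (by have := hval j; omega) hab
      omega
  | sr i => cases b with
    | r j =>
      simp only [psi] at hab
      replace hab := Multiplicative.ofAdd.injective hab
      have := key _ _ (by have := hval i; omega) (hval j) hab
      omega
    | sr j =>
      simp only [psi] at hab
      replace hab := Multiplicative.ofAdd.injective hab
      have := key _ _ (by have := hval i; omega) (by have := hval j; omega) hab
      have : i.val = j.val := by omega
      exact congrArg _ (ZMod.val_injective p this)

lemma psi_bij (p : ℕ) [NeZero p] : Function.Bijective (psi p) := by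
  haveI : NeZero (2 * p) := ⟨by have := NeZero.pos p; omega⟩
  rw [Fintype.bijective_iff_injective_and_card]
  refine ⟨psi_inj p, ?_⟩
  rw [DihedralGroup.card, Fintype.card_multiplicative, ZMod.card]

@[simp] lemma dihedral_inv_r (p : ℕ) (i : ZMod p) :
    (DihedralGroup.r i)⁻¹ = DihedralGroup.r (-i) := rfl

@[simp] lemma dihedral_inv_sr (p : ℕ) (i : ZMod p) :
    (DihedralGroup.sr i)⁻¹ = DihedralGroup.sr i := rfl

end Aux

/-- Every generalized Cayley graph on the cyclic group `ℤ/2pℤ`, `p` a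
prime, is a Cayley graph. -/
theorem stmt_13 (p : ℕ) (hp : p.Prime)
    (α : Multiplicative (ZMod (2 * p)) ≃* Multiplicative (ZMod (2 * p)))
    (S : Set (Multiplicative (ZMod (2 * p))))
    (h1 : ∀ x : Multiplicative (ZMod (2 * p)), α (α x) = x)
    (h2 : ∀ x : Multiplicative (ZMod (2 * p)), α x⁻¹ * x ∉ S)
    (h3 : ⇑α '' S⁻¹ = S) :
    IsCayleyGraph (GC α S h1 h2 h3) := by
  haveI : NeZero p := ⟨hp.pos.ne'⟩
  haveI : NeZero (2 * p) := ⟨by have := hp.pos; omega⟩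
  set c : ZMod (2 * p) := Multiplicative.toAdd (α (Multiplicative.ofAdd 1)) with hc
  have hone : α (Multiplicative.ofAdd 1) = Multiplicative.ofAdd c := by
    rw [hc, ofAdd_toAdd]
  have hA : ∀ x : Multiplicative (ZMod (2 * p)),
      α x = Multiplicative.ofAdd (Multiplicative.toAdd x * c) := by
    intro x
    have hx : x = (Multiplicative.ofAdd (1 : ZMod (2*p))) ^ (Multiplicative.toAdd x).val := by
      rw [← ofAdd_nsmul]
      simp [nsmul_eq_mul, ZMod.natCast_val, ZMod.cast_id]
    conv_lhs => rw [hx]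
    rw [map_pow, hone, ← ofAdd_nsmul, nsmul_eq_mul]
    congr 1
    rw [ZMod.natCast_val, ZMod.cast_id]
  have hcc : c * c = 1 := by
    have := h1 (Multiplicative.ofAdd 1)
    rw [hone, hA] at this
    simpa using this
  have hpm := sq_one_zmod p hp c hcc
  rcases hpm with h | h
  · -- α is the identity
    have hid : ∀ x, α x = x := fun x => by rw [hA x, h, mul_one, ofAdd_toAdd]
    have hα : ⇑α = id := funext hid
    refine ⟨⟨Multiplicative (ZMod (2 * p)), S, ?_, ?_, ⟨?_⟩⟩⟩
    · have := h2 1; simpa [hid] using this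
    · rwa [hα, Set.image_id] at h3
    · refine ⟨Equiv.refl _, ?_⟩
      intro a b
      show a⁻¹ * b ∈ S ↔ α a⁻¹ * b ∈ S
      rw [hid]
  · -- α is inversion
    have hinv : ∀ x, α x = x⁻¹ := fun x => by
      rw [hA x, h, mul_neg_one, ofAdd_neg, ofAdd_toAdd]
    have heven : ∀ m : ℕ, Multiplicative.ofAdd ((2 * m : ℕ) : ZMod (2 * p)) ∉ S := by
      intro m hm
      apply h2 (Multiplicative.ofAdd ((m : ℕ) : ZMod (2 * p)))
      rw [hinv, inv_inv]
      convert hm using 1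
      rw [← ofAdd_add]
      congr 1
      push_cast
      ring
    set T : Set (DihedralGroup p) := psi p ⁻¹' S with hT
    have hT1 : (1 : DihedralGroup p) ∉ T := by
      intro hmem
      have h10 : (1 : DihedralGroup p) = DihedralGroup.r 0 := rfl
      rw [hT, Set.mem_preimage, h10] at hmem
      simp only [psi] at hmem
      exact heven 0 (by simpa [ZMod.val_zero] using hmem)
    have hT2 : T⁻¹ = T := by
      ext x
      rw [Set.mem_inv, hT]
      cases x with
      | r i =>
        simp only [Set.mem_preimage, dihedral_inv_r, psi]
        exact iff_of_false (heven _) (heven _)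
      | sr i =>
        simp only [Set.mem_preimage, dihedral_inv_sr]
    have key : ∀ x y : DihedralGroup p, psi p (x⁻¹ * y) ∈ S ↔ psi p x * psi p y ∈ S := by
      intro x y
      cases x with
      | r i =>
        cases y with
        | r j =>
          simp only [dihedral_inv_r, DihedralGroup.r_mul_r, psi, ← ofAdd_add]
          refine iff_of_false (heven _) ?_
          have hEq : (((2 * i.val : ℕ) : ZMod (2 * p)) + ((2 * j.val : ℕ) : ZMod (2 * p))) =
              ((2 * (i.val + j.val) : ℕ) : ZMod (2 * p)) := by push_cast; ring
          rw [hEq]; exact heven _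
        | sr j =>
          simp only [dihedral_inv_r, DihedralGroup.r_mul_sr, psi, ← ofAdd_add]
          rw [sub_neg_eq_add, add_comm j i]
          rw [odd_eq p i j]
      | sr i =>
        cases y with
        | r j =>
          simp only [dihedral_inv_sr, DihedralGroup.sr_mul_r, psi, ← ofAdd_add]
          have hEq : ((2 * ((i + j).val) + 1 : ℕ) : ZMod (2 * p)) =
              ((2 * i.val + 1 : ℕ) : ZMod (2 * p)) + ((2 * j.val : ℕ) : ZMod (2 * p)) := by
            have := odd_eq p i j
            push_cast at this ⊢
            linear_combination this
          rw [hEq]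
        | sr j =>
          simp only [dihedral_inv_sr, DihedralGroup.sr_mul_sr, psi, ← ofAdd_add]
          refine iff_of_false (heven _) ?_
          have hEq : (((2 * i.val + 1 : ℕ) : ZMod (2 * p)) + ((2 * j.val + 1 : ℕ) : ZMod (2 * p))) =
              ((2 * (i.val + j.val + 1) : ℕ) : ZMod (2 * p)) := by push_cast; ring
          rw [hEq]; exact heven _
    refine ⟨⟨DihedralGroup p, T, hT1, hT2, ⟨?_⟩⟩⟩
    set e := Equiv.ofBijective (psi p) (psi_bij p) with he
    refine ⟨e.symm, ?_⟩
    intro a b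
    show (e.symm a)⁻¹ * e.symm b ∈ T ↔ α a⁻¹ * b ∈ S
    rw [hinv, inv_inv, hT, Set.mem_preimage, key]
    have ha : psi p (e.symm a) = a := e.apply_symm_apply a
    have hb : psi p (e.symm b) = b := e.apply_symm_apply b
    rw [ha, hb]
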